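/- Let D be a (v,k,2)-biplane with k ≥ 3, in which any two distinct blocks intersect in exactly two points. If (p,c) and (q,d) are distinct flags of D with p = q (and c ≠ d), or with c = d (and p ≠ q), then (p,c) and (q,d) are non-adjacent in Γ₂(D) and have no common neighbour in Γ₂(D). -/

import Mathlib

/-- A `(v,b,r,k,lam)`-balanced incomplete block design: a finite set of `v` points and a
family of `b` distinct blocks, each block a `k`-element subset of the points with
`1 < k < v`, such that every point lies in exactly `r` blocks and every pair of distinct
points is contained in exactly `lam` blocks (all parameters positive). -/
structure BIBD (v b r k lam : ℕ) where
  P : Type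
  [fintypeP : Fintype P]
  [decEqP : DecidableEq P]
  blocks : Finset (Finset P)
  card_points : Fintype.card P = v
  card_blocks : blocks.card = b
  block_size : ∀ c ∈ blocks, c.card = k
  one_lt_k : 1 < k
  k_lt_v : k < v
  lam_pos : 0 < lam
  point_deg : ∀ p : P, (blocks.filter (fun c => p ∈ c)).card = r
  pair_deg : ∀ p q : P, p ≠ q → (blocks.filter (fun c => p ∈ c ∧ q ∈ c)).card = lam

attribute [instance] BIBD.fintypeP BIBD.decEqP

variable {v b r k lam : ℕ}

/-- A flag of a BIBD: an incident point-block pair `(p, c)` with `p ∈ c`. -/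
def BIBD.Flag (D : BIBD v b r k lam) : Type :=
  {pc : D.P × Finset D.P // pc.2 ∈ D.blocks ∧ pc.1 ∈ pc.2}

instance (D : BIBD v b r k lam) : Fintype D.Flag :=
  inferInstanceAs (Fintype {pc : D.P × Finset D.P // pc.2 ∈ D.blocks ∧ pc.1 ∈ pc.2})

instance (D : BIBD v b r k lam) : DecidableEq D.Flag :=
  inferInstanceAs (DecidableEq {pc : D.P × Finset D.P // pc.2 ∈ D.blocks ∧ pc.1 ∈ pc.2})

/-- The graph `Γ₂(D)` on the flags of a `(v,k,2)`-biplane: flags `(p,c)` and `(q,d)` are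
adjacent iff `p ≠ q` and `c ∩ d = {p, q}`. -/
def BIBD.Gamma2 (D : BIBD v v k k 2) : SimpleGraph D.Flag where
  Adj x y := x.1.1 ≠ y.1.1 ∧ x.1.2 ∩ y.1.2 = {x.1.1, y.1.1}
  symm := ⟨fun _ _ h => ⟨h.1.symm, by rw [Finset.inter_comm, h.2, Finset.pair_comm]⟩⟩
  loopless := ⟨fun _ h => h.1 rfl⟩

instance (D : BIBD v v k k 2) : DecidableRel D.Gamma2.Adj :=
  fun x y => inferInstanceAs (Decidable (x.1.1 ≠ y.1.1 ∧ x.1.2 ∩ y.1.2 = {x.1.1, y.1.1}))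

/-- In the graph `Γ₂(D)` of a `(v,k,2)`-biplane with `k ≥ 3`, two distinct flags sharing
a point, or sharing a block, are non-adjacent and have no common neighbour. -/
theorem gamma2_same_point_or_block_no_common_neighbour (D : BIBD v v k k 2) (hk : 3 ≤ k)
    (hInt : ∀ c ∈ D.blocks, ∀ d ∈ D.blocks, c ≠ d → (c ∩ d).card = 2)
    (x y : D.Flag) (hne : x ≠ y) (hshare : x.1.1 = y.1.1 ∨ x.1.2 = y.1.2) :
    ¬ D.Gamma2.Adj x y ∧
      D.Gamma2.neighborFinset x ∩ D.Gamma2.neighborFinset y = ∅ := by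
  obtain ⟨⟨p, c⟩, hcB, hpc⟩ := x
  obtain ⟨⟨q, d⟩, hdB, hqd⟩ := y
  constructor
  · intro hadj
    obtain ⟨hadj1, hadj2⟩ := hadj
    rcases hshare with h | h
    · exact hadj1 h
    · simp only at h hadj2
      subst h
      rw [Finset.inter_self] at hadj2
      have hck : c.card = k := D.block_size c hcB
      have : c.card ≤ 2 := by
        rw [hadj2]; exact (Finset.card_insert_le _ _).trans (by simp)
      omega
  · rw [Finset.eq_empty_iff_forall_notMem]
    intro z hz
    replace hz := And.intro ((D.Gamma2.mem_neighborFinset _ _).1 (Finset.mem_inter.1 hz).1)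
      ((D.Gamma2.mem_neighborFinset _ _).1 (Finset.mem_inter.1 hz).2)
    obtain ⟨⟨hps, hce⟩, ⟨hqs, hde⟩⟩ := hz
    obtain ⟨⟨s, e⟩, heB, hse⟩ := z
    simp only at hps hce hqs hde hshare
    rcases hshare with h | h
    · subst h
      have hcd : c ≠ d := fun h => hne (Subtype.ext (by simp [h]))
      -- e ≠ c and e ≠ d
      have h2 : ({p, s} : Finset D.P).card = 2 := Finset.card_pair hps
      have hec : c ≠ e := by
        intro h; subst h
        rw [Finset.inter_self] at hce
        have := D.block_size c hcB
        rw [hce, h2] at this; omega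
      have hed : d ≠ e := by
        intro h; subst h
        rw [Finset.inter_self] at hde
        have := D.block_size d hdB
        rw [hde, h2] at this; omega
      have hpe : p ∈ e ∧ s ∈ e := by
        constructor
        · have : p ∈ c ∩ e := by rw [hce]; simp
          exact (Finset.mem_inter.1 this).2
        · have : s ∈ c ∩ e := by rw [hce]; simp
          exact (Finset.mem_inter.1 this).2
      have hsc : s ∈ c := by
        have : s ∈ c ∩ e := by rw [hce]; simp
        exact (Finset.mem_inter.1 this).1
      have hsd : s ∈ d := by
        have : s ∈ d ∩ e := by rw [hde]; simp
        exact (Finset.mem_inter.1 this).1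
      have hpd : p ∈ d := by
        have : p ∈ d ∩ e := by rw [hde]; simp
        exact (Finset.mem_inter.1 this).1
      have hsub : ({c, d, e} : Finset (Finset D.P)) ⊆
          D.blocks.filter (fun b => p ∈ b ∧ s ∈ b) := by
        intro t ht
        simp only [Finset.mem_insert, Finset.mem_singleton] at ht
        rcases ht with rfl | rfl | rfl <;>
          simp [Finset.mem_filter, hcB, hdB, heB, hpc, hsc, hpd, hsd, hpe.1, hpe.2]
      have hcard3 : ({c, d, e} : Finset (Finset D.P)).card = 3 := by
        rw [Finset.card_insert_of_notMem (by simp [hcd, hec]),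
            Finset.card_insert_of_notMem (by simp [hed]), Finset.card_singleton]
      have := Finset.card_le_card hsub
      rw [hcard3, D.pair_deg p s hps] at this
      omega
    · subst h
      have hpq : p ≠ q := fun h => hne (Subtype.ext (by simp [h]))
      rw [hce] at hde
      have : p ∈ ({q, s} : Finset D.P) := by rw [← hde]; simp
      simp only [Finset.mem_insert, Finset.mem_singleton] at this
      rcases this with h | h
      · exact hpq h
      · exact hps h
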